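/- Let d ≥ 0 and k ≥ 2 be integers. For every subset A of the binary cube {0,1}^d ⊆ ℤ^d one has P_k(A) ≤ |A|^{log₂(2k+2)}. -/

import Mathlib

open scoped BigOperators

/-- The discrete cube `{0,1,…,n-1}^d` inside `ℤ^d`. -/
def cube (n d : ℕ) : Set (Fin d → ℤ) := {x | ∀ i, 0 ≤ x i ∧ x i < n}

/-- The generalized additive energy
`P_k(A) = |{(a,h₁,…,h_k) : a+ε₁h₁+⋯+ε_kh_k ∈ A for all ε ∈ {0,1}^k}|`. -/
noncomputable def Pk (k : ℕ) {d : ℕ} (A : Set (Fin d → ℤ)) : ℕ :=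
  Set.ncard {p : (Fin d → ℤ) × (Fin k → Fin d → ℤ) |
    ∀ ε : Fin k → Bool,
      p.1 + ∑ i ∈ Finset.univ.filter (fun i => ε i = true), p.2 i ∈ A}

set_option linter.unusedSectionVars false

namespace EnergyAux

open Real

lemma chord {q w : ℝ} (hq0 : 0 ≤ q) (hq1 : q ≤ 1) (hw0 : 0 ≤ w) (hw1 : w ≤ 1) :
    1 + ((2:ℝ)^q - 1) * w ≤ (1+w)^q := by
  have h := (Real.concaveOn_rpow hq0 hq1).2
    (show (1:ℝ) ∈ Set.Ici (0:ℝ) by norm_num)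
    (show (2:ℝ) ∈ Set.Ici (0:ℝ) by norm_num)
    (show (0:ℝ) ≤ 1 - w by linarith) hw0 (show (1-w) + w = 1 by ring)
  simp only [smul_eq_mul, Real.one_rpow] at h
  have e : (1 - w) * 1 + w * 2 = 1 + w := by ring
  rw [e] at h
  calc 1 + ((2:ℝ)^q - 1) * w = (1-w) * 1 + w * (2:ℝ)^q := by ring
  _ ≤ _ := h

lemma core {p w : ℝ} (hp : 2 ≤ p) (hc : (3:ℝ)/2 ≤ (2:ℝ)^(p-2)) (hw0 : 0 ≤ w) (hw1 : w ≤ 1) :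
    1 - w^p ≤ (1+w)^(p-1) * (1-w) := by
  have hp0 : p ≠ 0 := by positivity
  rcases hw0.eq_or_lt with rfl | hw
  · simp [Real.zero_rpow hp0]
  have h1w : (0:ℝ) < 1 + w := by linarith
  have hfac : (1+w)^(p-1) = (1+w)^(p-2) * (1+w) := by
    rw [show p-1 = (p-2)+1 by ring, Real.rpow_add_one h1w.ne']
  rw [hfac, mul_assoc]
  rcases le_total (p-2) 1 with hq | hq
  · -- 2 ≤ p ≤ 3
    have hch : 1 + w/2 ≤ (1+w)^(p-2) := by
      have h1 := chord (q := p-2) (by linarith) hq hw0 hw1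
      nlinarith [hw0]
    have hw3 : w^(3:ℝ) ≤ w^p := Real.rpow_le_rpow_of_exponent_ge hw hw1 (by linarith)
    have hw3' : w^(3:ℝ) = w^(3:ℕ) := by
      rw [← Real.rpow_natCast w 3]; norm_num
    have hwp : w^(3:ℕ) ≤ w^p := by rw [← hw3']; exact hw3
    have hpos : 0 ≤ (1:ℝ) - w^2 := by nlinarith
    have step : (1 + w/2) * (1 - w^2) ≤ (1+w)^(p-2) * ((1+w)*(1-w)) := by
      have e2 : (1+w)*(1-w) = 1 - w^2 := by ring
      rw [e2]
      exact mul_le_mul_of_nonneg_right hch hpos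
    clear hw3 hw3' hc
    refine le_trans ?_ step
    have key : 1 - w^(3:ℕ) ≤ (1 + w/2) * (1 - w^2) := by
      nlinarith [mul_nonneg hw.le (sq_nonneg (1-w))]
    linarith [hwp, key]
  · -- 3 ≤ p
    have hb1 : 1 + (p-2)*w ≤ (1+w)^(p-2) := one_add_mul_self_le_rpow_one_add (by linarith) hq
    have hb2 : 1 + (p-2)*(w-1) ≤ w^(p-2) := by
      have := one_add_mul_self_le_rpow_one_add (s := w - 1) (by linarith) hq
      rwa [show (1:ℝ) + (w-1) = w by ring] at this
    have hsplit : w^p = w^(p-2) * w^2 := by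
      rw [show p = (p-2) + 2 by ring, Real.rpow_add hw, ← Real.rpow_natCast w 2]
      norm_num
    have hpos : 0 ≤ (1:ℝ) - w^2 := by nlinarith
    have step : (1 + (p-2)*w) * (1 - w^2) ≤ (1+w)^(p-2) * ((1+w)*(1-w)) := by
      have e2 : (1+w)*(1-w) = 1 - w^2 := by ring
      rw [e2]
      exact mul_le_mul_of_nonneg_right hb1 hpos
    refine le_trans ?_ step
    rw [hsplit]
    have h5 : (1 + (p-2)*(w-1))*w^2 ≤ w^(p-2)*w^2 :=
      mul_le_mul_of_nonneg_right hb2 (sq_nonneg w)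
    nlinarith [h5, mul_nonneg (mul_nonneg (show (0:ℝ) ≤ p-2 by linarith) hw.le)
      (show (0:ℝ) ≤ 1-w by linarith)]

lemma phi_ge {p : ℝ} (hp : 2 ≤ p) (hc : (3:ℝ)/2 ≤ (2:ℝ)^(p-2)) {u : ℝ} (hu : 1 ≤ u) :
    (2:ℝ)^p - 2 ≤ (u + u⁻¹)^p - u^p - u^(-p) := by
  set Φ : ℝ → ℝ := fun v => (v + v⁻¹)^p - v^p - v^(-p) with hΦ
  have hderiv : ∀ v : ℝ, 0 < v → HasDerivAt Φ
      ((1 + -(v^2)⁻¹) * p * (v+v⁻¹)^(p-1) - p * v^(p-1) - (-p) * v^(-p-1)) v := by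
    intro v hv
    have hvv : 0 < v + v⁻¹ := by positivity
    have h1 : HasDerivAt (fun x : ℝ => x + x⁻¹) (1 + -(v^2)⁻¹) v :=
      (hasDerivAt_id v).add (hasDerivAt_inv hv.ne')
    have h2 : HasDerivAt (fun x : ℝ => (x + x⁻¹)^p)
        ((1 + -(v^2)⁻¹) * p * (v+v⁻¹)^(p-1)) v := h1.rpow_const (Or.inl hvv.ne')
    have h3 : HasDerivAt (fun x : ℝ => x^p) (p * v^(p-1)) v :=
      Real.hasDerivAt_rpow_const (Or.inl hv.ne')
    have h4 : HasDerivAt (fun x : ℝ => x^(-p)) ((-p) * v^(-p-1)) v :=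
      Real.hasDerivAt_rpow_const (Or.inl hv.ne')
    exact (h2.sub h3).sub h4
  have hmono : MonotoneOn Φ (Set.Ici 1) := by
    apply monotoneOn_of_deriv_nonneg (convex_Ici 1)
    · intro v hv
      exact (hderiv v (lt_of_lt_of_le zero_lt_one hv)).continuousAt.continuousWithinAt
    · intro v hv
      rw [interior_Ici] at hv
      exact ((hderiv v (lt_trans zero_lt_one hv)).differentiableAt).differentiableWithinAt
    · intro v hv
      rw [interior_Ici] at hv
      have hv1 : (1:ℝ) < v := hv
      have hv0 : (0:ℝ) < v := lt_trans zero_lt_one hv1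
      rw [(hderiv v hv0).deriv]
      set w : ℝ := (v^2)⁻¹ with hw
      have hw0 : 0 < w := by positivity
      have hw1 : w ≤ 1 := by
        rw [hw, inv_le_one_iff₀]
        right; nlinarith
      have hvsum : v + v⁻¹ = v * (1 + w) := by
        field_simp [hw]
        rw [hw, mul_add, mul_inv_cancel₀ (pow_ne_zero 2 hv0.ne')]; ring
      have hsplit : (v + v⁻¹)^(p-1) = v^(p-1) * (1+w)^(p-1) := by
        rw [hvsum, Real.mul_rpow hv0.le (by positivity)]
      have hwp : v^(p-1) * w^p = v^(-p-1) := by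
        have hwv : w = v ^ (-2 : ℝ) := by
          rw [hw, Real.rpow_neg hv0.le, ← Real.rpow_natCast v 2]
          norm_num
        rw [hwv, ← Real.rpow_mul hv0.le, ← Real.rpow_add hv0]
        congr 1
        ring
      have hvp : (0:ℝ) ≤ v ^ (p-1) := Real.rpow_nonneg hv0.le _
      have hcore := core hp hc hw0.le hw1
      have hnn : 0 ≤ p * v^(p-1) * ((1+w)^(p-1)*(1-w) - (1 - w^p)) :=
        mul_nonneg (mul_nonneg (by linarith) hvp) (by linarith)
      calc (0:ℝ) ≤ p * v^(p-1) * ((1+w)^(p-1)*(1-w) - (1 - w^p)) := hnn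
      _ = (1 + -w) * p * (v^(p-1) * (1+w)^(p-1)) - p * v^(p-1) - (-p) * (v^(p-1) * w^p) := by
          ring
      _ = (1 + -w) * p * (v+v⁻¹)^(p-1) - p * v^(p-1) - (-p) * v^(-p-1) := by
          rw [← hsplit, hwp]
  have h1 : Φ 1 ≤ Φ u := hmono (Set.mem_Ici.mpr le_rfl) (Set.mem_Ici.mpr hu) hu
  have hΦ1 : Φ 1 = (2:ℝ)^p - 2 := by
    simp only [hΦ, inv_one, Real.one_rpow]
    norm_num
    ring
  rw [hΦ1] at h1
  exact h1

lemma key_ineq_aux {p : ℝ} (hp : 2 ≤ p) (hc : (3:ℝ)/2 ≤ (2:ℝ)^(p-2)) {x y : ℝ} (hx : 0 ≤ x)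
    (hxy : x ≤ y) :
    x^p + y^p + ((2:ℝ)^p - 2) * (x*y)^(p/2) ≤ (x+y)^p := by
  have hp0 : p ≠ 0 := by positivity
  have hp2 : p/2 ≠ 0 := by positivity
  rcases hx.eq_or_lt with rfl | hx0
  · simp [Real.zero_rpow hp0, Real.zero_rpow hp2]
  have hy0 : (0:ℝ) < y := lt_of_lt_of_le hx0 hxy
  set u : ℝ := (y/x)^((1:ℝ)/2) with hu_def
  have hyx : 1 ≤ y/x := by rw [le_div_iff₀ hx0]; linarith
  have hu1 : 1 ≤ u := by
    rw [hu_def]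
    calc (1:ℝ) = 1 ^ ((1:ℝ)/2) := (Real.one_rpow _).symm
    _ ≤ _ := Real.rpow_le_rpow zero_le_one hyx (by norm_num)
  have hu0 : (0:ℝ) < u := lt_of_lt_of_le zero_lt_one hu1
  set m : ℝ := (x*y)^((1:ℝ)/2) with hm_def
  have hm0 : (0:ℝ) < m := by rw [hm_def]; positivity
  have hmu : m * u = y := by
    rw [hm_def, hu_def, ← Real.mul_rpow (by positivity) (by positivity),
      show x*y*(y/x) = y^(2:ℕ) by field_simp,
      ← Real.rpow_natCast y 2, ← Real.rpow_mul hy0.le]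
    norm_num
  have huinv : u⁻¹ = (x/y)^((1:ℝ)/2) := by
    rw [hu_def, ← Real.inv_rpow (by positivity), inv_div]
  have hmu' : m * u⁻¹ = x := by
    rw [hm_def, huinv, ← Real.mul_rpow (by positivity) (by positivity),
      show x*y*(x/y) = x^(2:ℕ) by field_simp,
      ← Real.rpow_natCast x 2, ← Real.rpow_mul (le_of_lt hx0)]
    norm_num
  have hmp : m ^ p = (x*y)^(p/2) := by
    rw [hm_def, ← Real.rpow_mul (by positivity)]
    congr 1
    ring
  have key := phi_ge hp hc hu1
  have hmnn : (0:ℝ) ≤ m^p := Real.rpow_nonneg hm0.le _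
  have hmul := mul_le_mul_of_nonneg_left key hmnn
  have e1 : m^p * (u+u⁻¹)^p = (x+y)^p := by
    rw [← Real.mul_rpow hm0.le (by positivity), mul_add, hmu, hmu', add_comm]
  have e2 : m^p * u^p = y^p := by rw [← Real.mul_rpow hm0.le hu0.le, hmu]
  have e3 : m^p * u^(-p) = x^p := by
    rw [Real.rpow_neg hu0.le, ← Real.inv_rpow hu0.le,
      ← Real.mul_rpow hm0.le (by positivity), hmu']
  have hdist : m^p * ((u+u⁻¹)^p - u^p - u^(-p)) = (x+y)^p - y^p - x^p := by
    rw [mul_sub, mul_sub, e1, e2, e3]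
  have e4 : m^p * ((2:ℝ)^p - 2) = ((2:ℝ)^p - 2) * (x*y)^(p/2) := by
    rw [hmp]; ring
  rw [hdist, e4] at hmul
  linarith

lemma key_ineq {p : ℝ} (hp : 2 ≤ p) (hc : (3:ℝ)/2 ≤ (2:ℝ)^(p-2)) {x y : ℝ} (hx : 0 ≤ x)
    (hy : 0 ≤ y) :
    x^p + y^p + ((2:ℝ)^p - 2) * (x*y)^(p/2) ≤ (x+y)^p := by
  rcases le_total x y with h | h
  · exact key_ineq_aux hp hc hx h
  · have := key_ineq_aux hp hc hy h
    rw [mul_comm y x, add_comm y x] at this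
    linarith



variable {V : Type*} [AddCommGroup V] [DecidableEq V]

/-- Tuples `(a, h)` such that every subset-sum `a + ∑_{j ∈ S} h j` lies in `B`
(for `i ∉ S`) resp. `C` (for `i ∈ S`). -/
def QS (k : ℕ) (i : Fin k) (B C : Set V) : Set (V × (Fin k → V)) :=
  {p | ∀ S : Finset (Fin k), p.1 + ∑ j ∈ S, p.2 j ∈ (if i ∈ S then C else B)}

/-- Tuples `(a, h)` with all subset sums in `A`. -/
def TS (k : ℕ) (A : Set V) : Set (V × (Fin k → V)) :=
  {p | ∀ S : Finset (Fin k), p.1 + ∑ j ∈ S, p.2 j ∈ A}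

lemma QS_self (k : ℕ) (i : Fin k) (A : Set V) : QS k i A A = TS k A := by
  ext p; simp [QS, TS]

lemma QS_finite (k : ℕ) (i : Fin k) {B C : Set V} (hB : B.Finite) (hC : C.Finite) :
    (QS k i B C).Finite := by
  classical
  have hsub : QS k i B C ⊆
      (fun q : V × (Fin k → V) => (q.1, fun j => q.2 j - q.1)) ''
        ((B ∪ C) ×ˢ (Set.pi Set.univ fun _ : Fin k => (B ∪ C))) := by
    rintro ⟨a, h⟩ hp
    have ha : a ∈ B := by
      have := hp ∅
      simpa using this
    have hb : ∀ j, a + h j ∈ B ∪ C := by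
      intro j
      have H := hp {j}
      by_cases hij : i ∈ ({j} : Finset (Fin k))
      · rw [if_pos hij] at H
        simp only [Finset.sum_singleton] at H
        exact Or.inr H
      · rw [if_neg hij] at H
        simp only [Finset.sum_singleton] at H
        exact Or.inl H
    refine ⟨(a, fun j => a + h j), ⟨Or.inl ha, ?_⟩, ?_⟩
    · intro j _; exact hb j
    · simp
  exact (Set.Finite.image _ (((hB.union hC)).prod (Set.Finite.pi fun _ => hB.union hC))).subset hsub

lemma TS_finite (k : ℕ) {A : Set V} (hA : A.Finite) (i : Fin k) : (TS k A).Finite := by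
  rw [← QS_self k i A]
  exact QS_finite k i hA hA

lemma TS_finite' (k : ℕ) {A : Set V} (hA : A.Finite) : (TS k A).Finite := by
  rcases Nat.eq_zero_or_pos k with rfl | hk
  · -- no index; direct
    have hsub : TS 0 A ⊆ (fun q : V × (Fin 0 → V) => (q.1, fun j => q.2 j - q.1)) ''
        (A ×ˢ (Set.pi Set.univ fun _ : Fin 0 => A)) := by
      rintro ⟨a, h⟩ hp
      refine ⟨(a, fun j => j.elim0), ⟨by simpa using hp ∅, by intro j _; exact j.elim0⟩, ?_⟩
      simp
      funext j; exact j.elim0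
    exact (Set.Finite.image _ (hA.prod (Set.Finite.pi fun _ => hA))).subset hsub
  · exact TS_finite k hA ⟨0, hk⟩

/-- the `a`-counting set -/
def NS (k : ℕ) (i : Fin k) (B : Set V) (g : Fin k → V) : Set V :=
  {a | ∀ S : Finset (Fin k), i ∉ S → a + ∑ j ∈ S, g j ∈ B}

lemma ncard_prod {α β : Type*} (s : Set α) (t : Set β) :
    (s ×ˢ t).ncard = s.ncard * t.ncard := by
  rw [← Nat.card_coe_set_eq, Nat.card_congr (Equiv.Set.prod s t), Nat.card_prod,
    Nat.card_coe_set_eq, Nat.card_coe_set_eq]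

section Fiber

variable (k : ℕ) (i : Fin k) (B C : Set V)

/-- projection forgetting the `i`-th increment -/
noncomputable def proj : V × (Fin k → V) → (Fin k → V) :=
  fun p => Function.update p.2 i (0 : V)

lemma fiber_eq {g : Fin k → V} (hg : g i = 0) :
    QS k i B C ∩ (proj k i) ⁻¹' {g} =
      (fun ac : V × V => (ac.1, Function.update g i (ac.2 - ac.1))) ''
        ((NS k i B g) ×ˢ (NS k i C g)) := by
  classical
  ext p
  constructor
  · rintro ⟨hmem, hfib⟩
    have hfib' : Function.update p.2 i 0 = g := hfib
    have hpj : ∀ j, j ≠ i → p.2 j = g j := by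
      intro j hj
      rw [← hfib', Function.update_of_ne hj]
    have hsumeq : ∀ S : Finset (Fin k), i ∉ S → ∑ j ∈ S, g j = ∑ j ∈ S, p.2 j := by
      intro S hiS
      refine Finset.sum_congr rfl ?_
      intro j hj
      exact (hpj j (fun h => hiS (by rw [← h]; exact hj))).symm
    refine ⟨(p.1, p.1 + p.2 i), ⟨?_, ?_⟩, ?_⟩
    · intro S hiS
      have := hmem S
      rw [if_neg hiS] at this
      rw [hsumeq S hiS]
      exact this
    · intro S hiS
      have := hmem (insert i S)
      rw [if_pos (Finset.mem_insert_self i S), Finset.sum_insert hiS] at this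
      rw [hsumeq S hiS]
      convert this using 1
      exact add_assoc _ _ _
    · have : Function.update g i (p.1 + p.2 i - p.1) = p.2 := by
        funext j
        by_cases hj : j = i
        · subst hj; rw [Function.update_self]; abel
        · rw [Function.update_of_ne hj]; exact (hpj j hj).symm
      dsimp only
      exact Prod.ext rfl this
  · rintro ⟨⟨a, c⟩, ⟨haN, hcN⟩, rfl⟩
    constructor
    · intro S
      by_cases hiS : i ∈ S
      · rw [if_pos hiS]
        rw [Finset.sum_update_of_mem hiS]
        have hni : i ∉ S \ {i} := by simp
        have := hcN (S \ {i}) hni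
        convert this using 1
        abel
      · rw [if_neg hiS]
        have : ∑ j ∈ S, Function.update g i (c - a) j = ∑ j ∈ S, g j := by
          refine Finset.sum_congr rfl ?_
          intro j hj
          exact Function.update_of_ne (fun h => hiS (by rw [← h]; exact hj)) _ _
        rw [this]
        exact haN S hiS
    · show Function.update (Function.update g i (c - a)) i 0 = g
      rw [Function.update_idem, ← hg, Function.update_eq_self]

lemma fiber_ncard {g : Fin k → V} (hg : g i = 0) :
    (QS k i B C ∩ (proj k i) ⁻¹' {g}).ncard = (NS k i B g).ncard * (NS k i C g).ncard := by
  rw [fiber_eq k i B C hg, Set.ncard_image_of_injective _ ?_, ncard_prod]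
  intro ac bd h
  dsimp only at h
  rw [Prod.mk.injEq] at h
  obtain ⟨h1, h2⟩ := h
  have h3 := congrFun h2 i
  rw [Function.update_self, Function.update_self] at h3
  have h4 : ac.2 = bd.2 := by
    rw [h1] at h3
    exact sub_left_inj.mp h3
  exact Prod.ext h1 h4

end Fiber

section CS

variable (k : ℕ) (i : Fin k) {B C : Set V}

set_option maxHeartbeats 800000 in
lemma cs_bound (hB : B.Finite) (hC : C.Finite) :
    (QS k i B C).ncard ^ 2 ≤ (TS k B).ncard * (TS k C).ncard := by
  classical
  have hQ : (QS k i B C).Finite := QS_finite k i hB hC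
  have hTB : (TS k B).Finite := TS_finite k hB i
  have hTC : (TS k C).Finite := TS_finite k hC i
  set q : Finset (V × (Fin k → V)) := hQ.toFinset with hq
  set b : Finset (V × (Fin k → V)) := hTB.toFinset with hb
  set c : Finset (V × (Fin k → V)) := hTC.toFinset with hc
  set G : Finset (Fin k → V) :=
    (q.image (proj k i)) ∪ (b.image (proj k i)) ∪ (c.image (proj k i)) with hG
  have hGz : ∀ g ∈ G, g i = 0 := by
    intro g hg
    rw [hG] at hg
    simp only [Finset.mem_union, Finset.mem_image] at hg
    rcases hg with (⟨p, _, rfl⟩ | ⟨p, _, rfl⟩) | ⟨p, _, rfl⟩ <;>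
      simp [proj]
  -- fiberwise card identity for an arbitrary finset coming from a finite set
  have main : ∀ (D E : Set V) (hD : (QS k i D E).Finite)
      (hsub : hD.toFinset.image (proj k i) ⊆ G),
      hD.toFinset.card = ∑ g ∈ G, (NS k i D g).ncard * (NS k i E g).ncard := by
    intro D E hD hsub
    rw [Finset.card_eq_sum_card_fiberwise (f := proj k i) (t := G)
      (fun x hx => hsub (Finset.mem_image_of_mem _ hx))]
    refine Finset.sum_congr rfl ?_
    intro g hg
    have hcoe : ↑(hD.toFinset.filter fun p => proj k i p = g)
        = QS k i D E ∩ (proj k i) ⁻¹' {g} := by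
      ext p
      simp [Set.Finite.mem_toFinset]
    rw [← fiber_ncard k i D E (hGz g hg), ← hcoe, Set.ncard_coe_finset]
  have hqcard : q.card = ∑ g ∈ G, (NS k i B g).ncard * (NS k i C g).ncard := by
    refine main B C hQ ?_
    rw [hG]
    exact Finset.subset_union_left.trans Finset.subset_union_left
  have hbQ : (TS k B) = QS k i B B := (QS_self k i B).symm
  have hcQ : (TS k C) = QS k i C C := (QS_self k i C).symm
  have hbfin : (QS k i B B).Finite := hbQ ▸ hTB
  have hcfin : (QS k i C C).Finite := hcQ ▸ hTC
  have hbcard : b.card = ∑ g ∈ G, (NS k i B g).ncard * (NS k i B g).ncard := by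
    have hb' : b = hbfin.toFinset := by
      apply Finset.coe_injective
      simp [hb, hbQ]
    rw [hb']
    refine main B B hbfin ?_
    rw [hG]
    rw [hb']
    exact Finset.subset_union_right.trans Finset.subset_union_left
  have hccard : c.card = ∑ g ∈ G, (NS k i C g).ncard * (NS k i C g).ncard := by
    have hc' : c = hcfin.toFinset := by
      apply Finset.coe_injective
      simp [hc, hcQ]
    rw [hc']
    refine main C C hcfin ?_
    rw [hG, hc']
    exact Finset.subset_union_right
  have hCS := Finset.sum_mul_sq_le_sq_mul_sq G (fun g => ((NS k i B g).ncard : ℤ))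
    (fun g => ((NS k i C g).ncard : ℤ))
  have hQn : (QS k i B C).ncard = q.card := Set.ncard_eq_toFinset_card _ hQ
  have hBn : (TS k B).ncard = b.card := Set.ncard_eq_toFinset_card _ hTB
  have hCn : (TS k C).ncard = c.card := Set.ncard_eq_toFinset_card _ hTC
  rw [hQn, hBn, hCn]
  have hq2 : ((q.card : ℤ))^2 ≤ (b.card : ℤ) * (c.card : ℤ) := by
    have e1 : (q.card : ℤ) = ∑ g ∈ G, ((NS k i B g).ncard : ℤ) * ((NS k i C g).ncard : ℤ) := by
      rw [hqcard]; push_cast; rfl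
    have e2 : (b.card : ℤ) = ∑ g ∈ G, ((NS k i B g).ncard : ℤ)^2 := by
      rw [hbcard]; push_cast
      refine Finset.sum_congr rfl fun g _ => ?_
      ring
    have e3 : (c.card : ℤ) = ∑ g ∈ G, ((NS k i C g).ncard : ℤ)^2 := by
      rw [hccard]; push_cast
      refine Finset.sum_congr rfl fun g _ => ?_
      ring
    rw [e1, e2, e3]
    exact hCS
  exact_mod_cast hq2

lemma ncard_biUnion_le {α ι : Type*} (s : Finset ι) (f : ι → Set α) :
    (⋃ i ∈ s, f i).ncard ≤ ∑ i ∈ s, (f i).ncard := by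
  classical
  induction s using Finset.induction_on with
  | empty => simp
  | @insert a s ha ih =>
    rw [Finset.set_biUnion_insert, Finset.sum_insert ha]
    exact le_trans (Set.ncard_union_le _ _) (by gcongr)

lemma ncard_iUnion_le {α ι : Type*} [Fintype ι] (f : ι → Set α) :
    (⋃ i, f i).ncard ≤ ∑ i, (f i).ncard := by
  have : (⋃ i, f i) = ⋃ i ∈ Finset.univ, f i := by simp
  rw [this]
  exact ncard_biUnion_le _ _

section Cover

variable (k : ℕ) (f : V →+ ℤ) (A : Set V)

lemma cover (h01 : ∀ x ∈ A, f x = 0 ∨ f x = 1) :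
    TS k A ⊆ (TS k {x | x ∈ A ∧ f x = 0} ∪ TS k {x | x ∈ A ∧ f x = 1}) ∪
      ((⋃ i : Fin k, QS k i {x | x ∈ A ∧ f x = 0} {x | x ∈ A ∧ f x = 1}) ∪
       (⋃ i : Fin k, QS k i {x | x ∈ A ∧ f x = 1} {x | x ∈ A ∧ f x = 0})) := by
  classical
  intro p hp
  have hval : ∀ S : Finset (Fin k), f (p.1 + ∑ j ∈ S, p.2 j) = f p.1 + ∑ j ∈ S, f (p.2 j) := by
    intro S; rw [map_add, map_sum]
  have hin : ∀ S : Finset (Fin k),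
      f p.1 + ∑ j ∈ S, f (p.2 j) = 0 ∨ f p.1 + ∑ j ∈ S, f (p.2 j) = 1 := by
    intro S; rw [← hval]; exact h01 _ (hp S)
  by_cases hall : ∀ j, f (p.2 j) = 0
  · have hsum0 : ∀ S : Finset (Fin k), ∑ j ∈ S, f (p.2 j) = 0 :=
      fun S => Finset.sum_eq_zero fun j _ => hall j
    have ht := hin ∅
    rw [Finset.sum_empty, add_zero] at ht
    rcases ht with ht | ht
    · refine Or.inl (Or.inl ?_)
      intro S
      refine ⟨hp S, ?_⟩
      rw [hval, hsum0, add_zero, ht]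
    · refine Or.inl (Or.inr ?_)
      intro S
      refine ⟨hp S, ?_⟩
      rw [hval, hsum0, add_zero, ht]
  · push_neg at hall
    obtain ⟨i, hi⟩ := hall
    have h0 := hin ∅
    rw [Finset.sum_empty, add_zero] at h0
    have h1 := hin {i}
    rw [Finset.sum_singleton] at h1
    have hzero : ∀ j, j ≠ i → f (p.2 j) = 0 := by
      intro j hj
      have h2 := hin {j}
      rw [Finset.sum_singleton] at h2
      have h3 := hin {i, j}
      rw [Finset.sum_pair (Ne.symm hj)] at h3
      omega
    have hsum : ∀ S : Finset (Fin k), ∑ j ∈ S, f (p.2 j) = if i ∈ S then f (p.2 i) else 0 := by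
      intro S
      by_cases hiS : i ∈ S
      · rw [if_pos hiS]
        exact Finset.sum_eq_single_of_mem i hiS (fun j _ hj => hzero j hj)
      · rw [if_neg hiS]
        exact Finset.sum_eq_zero fun j hj => hzero j (fun h => hiS (h ▸ hj))
    have hti : (f p.1 = 0 ∧ f (p.2 i) = 1) ∨ (f p.1 = 1 ∧ f (p.2 i) = -1) := by omega
    rcases hti with ⟨ht, hs⟩ | ⟨ht, hs⟩
    · refine Or.inr (Or.inl (Set.mem_iUnion.mpr ⟨i, ?_⟩))
      intro S
      by_cases hiS : i ∈ S
      · rw [if_pos hiS]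
        refine ⟨hp S, ?_⟩
        rw [hval, hsum, if_pos hiS, hs, ht]
        norm_num
      · rw [if_neg hiS]
        refine ⟨hp S, ?_⟩
        rw [hval, hsum, if_neg hiS, ht, add_zero]
    · refine Or.inr (Or.inr (Set.mem_iUnion.mpr ⟨i, ?_⟩))
      intro S
      by_cases hiS : i ∈ S
      · rw [if_pos hiS]
        refine ⟨hp S, ?_⟩
        rw [hval, hsum, if_pos hiS, hs, ht]
        norm_num
      · rw [if_neg hiS]
        refine ⟨hp S, ?_⟩
        rw [hval, hsum, if_neg hiS, ht, add_zero]

end Cover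

section MainStep

variable (k : ℕ) (f : V →+ ℤ) (A : Set V)

lemma sqrt_bound {B C : Set V} (i : Fin k) (hB : B.Finite) (hC : C.Finite) :
    ((QS k i B C).ncard : ℝ) ≤ Real.sqrt (((TS k B).ncard : ℝ) * ((TS k C).ncard : ℝ)) := by
  have h := cs_bound k i hB hC
  have h' : (((QS k i B C).ncard : ℝ))^2 ≤ ((TS k B).ncard : ℝ) * ((TS k C).ncard : ℝ) := by
    exact_mod_cast h
  have := Real.sqrt_le_sqrt h'
  rwa [Real.sqrt_sq (by positivity)] at this

lemma main_step (hA : A.Finite) (h01 : ∀ x ∈ A, f x = 0 ∨ f x = 1) :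
    ((TS k A).ncard : ℝ) ≤ ((TS k {x | x ∈ A ∧ f x = 0}).ncard : ℝ)
      + ((TS k {x | x ∈ A ∧ f x = 1}).ncard : ℝ)
      + 2 * k * Real.sqrt (((TS k {x | x ∈ A ∧ f x = 0}).ncard : ℝ)
          * ((TS k {x | x ∈ A ∧ f x = 1}).ncard : ℝ)) := by
  classical
  set A₀ : Set V := {x | x ∈ A ∧ f x = 0} with hA₀
  set A₁ : Set V := {x | x ∈ A ∧ f x = 1} with hA₁
  have hA₀f : A₀.Finite := hA.subset (fun x hx => hx.1)
  have hA₁f : A₁.Finite := hA.subset (fun x hx => hx.1)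
  set U₀ : Set (V × (Fin k → V)) := ⋃ i : Fin k, QS k i A₀ A₁ with hU₀
  set U₁ : Set (V × (Fin k → V)) := ⋃ i : Fin k, QS k i A₁ A₀ with hU₁
  have hfin : ((TS k A₀ ∪ TS k A₁) ∪ (U₀ ∪ U₁)).Finite := by
    refine ((((TS_finite' k hA₀f).union (TS_finite' k hA₁f))).union ?_)
    refine Set.Finite.union ?_ ?_ <;>
      exact Set.finite_iUnion (fun i => QS_finite k i (by first | exact hA₀f | exact hA₁f)
        (by first | exact hA₀f | exact hA₁f))
  have h1 : (TS k A).ncard ≤ ((TS k A₀ ∪ TS k A₁) ∪ (U₀ ∪ U₁)).ncard :=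
    Set.ncard_le_ncard (cover k f A h01) hfin
  have h2 : ((TS k A₀ ∪ TS k A₁) ∪ (U₀ ∪ U₁)).ncard ≤
      ((TS k A₀).ncard + (TS k A₁).ncard) + (U₀.ncard + U₁.ncard) :=
    le_trans (Set.ncard_union_le _ _)
      (add_le_add (Set.ncard_union_le _ _) (Set.ncard_union_le _ _))
  have hU₀le : (U₀.ncard : ℝ) ≤ k * Real.sqrt (((TS k A₀).ncard : ℝ) * ((TS k A₁).ncard : ℝ)) := by
    have hn : U₀.ncard ≤ ∑ i : Fin k, (QS k i A₀ A₁).ncard := ncard_iUnion_le _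
    calc (U₀.ncard : ℝ) ≤ ∑ i : Fin k, ((QS k i A₀ A₁).ncard : ℝ) := by exact_mod_cast hn
    _ ≤ ∑ _i : Fin k, Real.sqrt (((TS k A₀).ncard : ℝ) * ((TS k A₁).ncard : ℝ)) :=
        Finset.sum_le_sum (fun i _ => sqrt_bound k i hA₀f hA₁f)
    _ = k * Real.sqrt (((TS k A₀).ncard : ℝ) * ((TS k A₁).ncard : ℝ)) := by
        rw [Finset.sum_const, Finset.card_univ, Fintype.card_fin, nsmul_eq_mul]
  have hU₁le : (U₁.ncard : ℝ) ≤ k * Real.sqrt (((TS k A₀).ncard : ℝ) * ((TS k A₁).ncard : ℝ)) := by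
    have hn : U₁.ncard ≤ ∑ i : Fin k, (QS k i A₁ A₀).ncard := ncard_iUnion_le _
    calc (U₁.ncard : ℝ) ≤ ∑ i : Fin k, ((QS k i A₁ A₀).ncard : ℝ) := by exact_mod_cast hn
    _ ≤ ∑ _i : Fin k, Real.sqrt (((TS k A₁).ncard : ℝ) * ((TS k A₀).ncard : ℝ)) :=
        Finset.sum_le_sum (fun i _ => sqrt_bound k i hA₁f hA₀f)
    _ = k * Real.sqrt (((TS k A₀).ncard : ℝ) * ((TS k A₁).ncard : ℝ)) := by
        rw [Finset.sum_const, Finset.card_univ, Fintype.card_fin, nsmul_eq_mul, mul_comm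
          (((TS k A₁).ncard : ℝ))]
  have h12 : ((TS k A).ncard : ℝ) ≤ ((TS k A₀).ncard : ℝ) + ((TS k A₁).ncard : ℝ)
      + ((U₀.ncard : ℝ) + (U₁.ncard : ℝ)) := by
    have := le_trans h1 h2
    push_cast [← Nat.cast_le (α := ℝ)] at this ⊢
    exact_mod_cast this
  linarith

end MainStep

section Transport

variable {W : Type*} [AddCommGroup W]

lemma TS_image_hom (k : ℕ) (φ : V →+ W) (hφ : Function.Injective φ) (A : Set V) :
    TS k (φ '' A) = (fun p : V × (Fin k → V) => (φ p.1, fun j => φ (p.2 j))) '' TS k A := by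
  classical
  ext p
  constructor
  · intro hp
    obtain ⟨a, haA, hae⟩ : ∃ a, a ∈ A ∧ φ a = p.1 := by
      have := hp ∅
      simpa [Set.mem_image] using this
    have hj : ∀ j, ∃ b, b ∈ A ∧ φ b = p.1 + p.2 j := by
      intro j
      have := hp {j}
      simpa [Set.mem_image] using this
    choose b hbA hbe using hj
    refine ⟨(a, fun j => b j - a), ?_, ?_⟩
    · intro S
      have he : φ (a + ∑ j ∈ S, (b j - a)) = p.1 + ∑ j ∈ S, p.2 j := by
        rw [map_add, map_sum]
        have hc : ∀ j ∈ S, φ (b j - a) = p.2 j := by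
          intro j _
          rw [map_sub, hbe, hae]
          abel
        rw [Finset.sum_congr rfl hc, hae]
      have hm := hp S
      rw [← he] at hm
      exact (hφ.mem_set_image).mp hm
    · have h2 : (fun j => φ (b j - a)) = p.2 := by
        funext j
        rw [map_sub, hbe, hae]
        abel
      dsimp only
      exact Prod.ext hae h2
  · rintro ⟨q, hq, rfl⟩
    intro S
    dsimp only
    rw [← map_sum φ (fun j => q.2 j) S, ← map_add]
    exact Set.mem_image_of_mem _ (hq S)

lemma TS_ncard_image_hom (k : ℕ) (φ : V →+ W) (hφ : Function.Injective φ) (A : Set V) :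
    (TS k (φ '' A)).ncard = (TS k A).ncard := by
  rw [TS_image_hom k φ hφ A]
  apply Set.ncard_image_of_injective
  intro p q h
  rw [Prod.mk.injEq] at h
  refine Prod.ext (hφ h.1) ?_
  funext j
  exact hφ (congrFun h.2 j)

lemma TS_translate (k : ℕ) (v : V) (A : Set V) :
    TS k ((fun x => v + x) '' A) = (fun p : V × (Fin k → V) => (v + p.1, p.2)) '' TS k A := by
  ext p
  constructor
  · intro hp
    refine ⟨(- v + p.1, p.2), ?_, by simp⟩
    intro S
    have := hp S
    have hinj : Function.Injective (fun x : V => v + x) := fun a b h => by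
      simpa using h
    rw [show p.1 + ∑ j ∈ S, p.2 j = v + ((-v + p.1) + ∑ j ∈ S, p.2 j) by abel] at this
    exact hinj.mem_set_image.mp this
  · rintro ⟨q, hq, rfl⟩
    intro S
    dsimp only
    rw [show v + q.1 + ∑ j ∈ S, q.2 j = v + (q.1 + ∑ j ∈ S, q.2 j) by abel]
    exact Set.mem_image_of_mem _ (hq S)

lemma TS_ncard_translate (k : ℕ) (v : V) (A : Set V) :
    (TS k ((fun x => v + x) '' A)).ncard = (TS k A).ncard := by
  rw [TS_translate k v A]
  apply Set.ncard_image_of_injective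
  intro p q h
  rw [Prod.mk.injEq] at h
  exact Prod.ext (by have := h.1; simpa using this) h.2

end Transport

end CS

section Geometry

open Fin

def snocHom (d : ℕ) : (Fin d → ℤ) →+ (Fin (d+1) → ℤ) where
  toFun y := Fin.snoc y 0
  map_zero' := by
    funext i
    refine Fin.lastCases ?_ ?_ i <;> simp
  map_add' y z := by
    funext i
    refine Fin.lastCases ?_ ?_ i <;> simp

lemma snocHom_apply (d : ℕ) (y : Fin d → ℤ) : snocHom d y = Fin.snoc y 0 := rfl

lemma snocHom_inj (d : ℕ) : Function.Injective (snocHom d) := by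
  intro y z h
  funext i
  have := congrFun h (Fin.castSucc i)
  simpa [snocHom_apply] using this

lemma slice_eq (d : ℕ) (A : Set (Fin (d+1) → ℤ)) (c : ℤ) :
    {x | x ∈ A ∧ x (Fin.last d) = c}
      = (fun x => (Fin.snoc (0 : Fin d → ℤ) c : Fin (d+1) → ℤ) + x) ''
          ((snocHom d) '' {y : Fin d → ℤ | Fin.snoc y c ∈ A}) := by
  ext x
  constructor
  · rintro ⟨hxA, hxc⟩
    refine ⟨snocHom d (Fin.init x), ⟨Fin.init x, ?_, rfl⟩, ?_⟩
    · show Fin.snoc (Fin.init x) c ∈ A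
      rw [← hxc, Fin.snoc_init_self]
      exact hxA
    · rw [snocHom_apply]
      funext i
      refine Fin.lastCases ?_ ?_ i
      · simp [hxc]
      · intro j
        simp [Fin.init]
  · rintro ⟨z, ⟨y, hy, rfl⟩, rfl⟩
    have hx : (Fin.snoc (0 : Fin d → ℤ) c : Fin (d+1) → ℤ) + snocHom d y = Fin.snoc y c := by
      rw [snocHom_apply]
      funext i
      refine Fin.lastCases ?_ ?_ i
      · simp
      · intro j
        simp
    dsimp only
    rw [hx]
    exact ⟨hy, by simp⟩

lemma slice_ncard_TS (k d : ℕ) (A : Set (Fin (d+1) → ℤ)) (c : ℤ) :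
    (TS k {x | x ∈ A ∧ x (Fin.last d) = c}).ncard
      = (TS k {y : Fin d → ℤ | Fin.snoc y c ∈ A}).ncard := by
  rw [slice_eq, TS_ncard_translate, TS_ncard_image_hom k (snocHom d) (snocHom_inj d)]

lemma slice_ncard (d : ℕ) (A : Set (Fin (d+1) → ℤ)) (c : ℤ) :
    {x | x ∈ A ∧ x (Fin.last d) = c}.ncard = {y : Fin d → ℤ | Fin.snoc y c ∈ A}.ncard := by
  rw [slice_eq, Set.ncard_image_of_injective _ (add_right_injective _),
    Set.ncard_image_of_injective _ (snocHom_inj d)]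

lemma cube_finite (n d : ℕ) : (cube n d).Finite := by
  have h : cube n d = Set.pi Set.univ (fun _ : Fin d => {t : ℤ | 0 ≤ t ∧ t < n}) := by
    ext x; simp [cube, Set.mem_pi]
  rw [h]
  exact Set.Finite.pi fun _ => (Set.finite_Ico (0:ℤ) n).subset fun t ht => by
    simp only [Set.mem_Ico]; exact ht

lemma Pk_eq_TS (k : ℕ) {d : ℕ} (A : Set (Fin d → ℤ)) : Pk k A = (TS k A).ncard := by
  classical
  unfold Pk TS
  congr 1
  ext p
  constructor
  · intro h S
    have h2 := h (fun i => decide (i ∈ S))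
    have e : Finset.univ.filter (fun i => decide (i ∈ S) = true) = S := by
      ext i; simp
    rwa [e] at h2
  · intro h ε
    exact h (Finset.univ.filter (fun i => ε i = true))

end Geometry

section Main

lemma main_bound (k : ℕ) (hk : 2 ≤ k) :
    ∀ (d : ℕ) (A : Set (Fin d → ℤ)), A ⊆ cube 2 d →
      ((TS k A).ncard : ℝ) ≤ (A.ncard : ℝ) ^ Real.logb 2 (2 * (k:ℝ) + 2) := by
  set p : ℝ := Real.logb 2 (2 * (k:ℝ) + 2) with hpdef
  have hkk : (2:ℝ) ≤ (k:ℝ) := by exact_mod_cast hk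
  have h2p : (2:ℝ) ^ p = 2 * (k:ℝ) + 2 := Real.rpow_logb (by norm_num) (by norm_num) (by positivity)
  have h4 : (2:ℝ) ^ (2:ℝ) = 4 := by
    rw [show (2:ℝ) = ((2:ℕ):ℝ) from by norm_num, Real.rpow_natCast]
    norm_num
  have hp2 : 2 ≤ p := by
    have : (2:ℝ) ^ (2:ℝ) ≤ (2:ℝ) ^ p := by rw [h2p, h4]; linarith
    exact (Real.rpow_le_rpow_left_iff (by norm_num)).mp this
  have hpc : (3:ℝ)/2 ≤ (2:ℝ) ^ (p - 2) := by
    rw [Real.rpow_sub (by norm_num), h2p, h4, le_div_iff₀ (by norm_num)]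
    linarith
  have hp0 : p ≠ 0 := by positivity
  intro d
  induction d with
  | zero =>
    intro A hA
    have hss : ∀ a b : Fin 0 → ℤ, a = b := fun a b => funext fun i => i.elim0
    rcases A.eq_empty_or_nonempty with rfl | ⟨x₀, hx₀⟩
    · have hTS : TS k (∅ : Set (Fin 0 → ℤ)) = ∅ := by
        ext q
        simp only [Set.mem_empty_iff_false, iff_false]
        intro hq
        exact (hq ∅ : q.1 + _ ∈ (∅:Set (Fin 0 → ℤ)))
      rw [hTS]
      simp [Real.zero_rpow hp0]
    · have hAeq : A = {x₀} := Set.eq_singleton_iff_unique_mem.mpr ⟨hx₀, fun y _ => hss y x₀⟩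
      have hTS : TS k A = {(x₀, fun _ => x₀)} := by
        ext q
        constructor
        · intro _
          have h1 : q.1 = x₀ := hss _ _
          have h2 : q.2 = fun _ => x₀ := funext fun j => hss _ _
          simp [Set.mem_singleton_iff, Prod.ext_iff, h1, h2]
        · intro _ S
          rw [hAeq]
          exact Set.mem_singleton_iff.mpr (hss _ _)
      rw [hTS, hAeq, Set.ncard_singleton, Set.ncard_singleton]
      rw [Nat.cast_one, Real.one_rpow]
  | succ d ih =>
    intro A hA
    have hAfin : A.Finite := (cube_finite 2 (d+1)).subset hA
    set f : (Fin (d+1) → ℤ) →+ ℤ := Pi.evalAddMonoidHom (fun _ : Fin (d+1) => ℤ) (Fin.last d)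
      with hf
    have hfx : ∀ x : Fin (d+1) → ℤ, f x = x (Fin.last d) := fun _ => rfl
    have h01 : ∀ x ∈ A, f x = 0 ∨ f x = 1 := by
      intro x hx
      have := hA hx (Fin.last d)
      rw [hfx]
      omega
    have hms := main_step k f A hAfin h01
    set A₀ : Set (Fin (d+1) → ℤ) := {x | x ∈ A ∧ f x = 0} with hA₀
    set A₁ : Set (Fin (d+1) → ℤ) := {x | x ∈ A ∧ f x = 1} with hA₁
    set B₀ : Set (Fin d → ℤ) := {y | Fin.snoc y 0 ∈ A} with hB₀
    set B₁ : Set (Fin d → ℤ) := {y | Fin.snoc y 1 ∈ A} with hB₁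
    have hA₀e : A₀ = {x | x ∈ A ∧ x (Fin.last d) = 0} := rfl
    have hA₁e : A₁ = {x | x ∈ A ∧ x (Fin.last d) = 1} := rfl
    have hT₀ : (TS k A₀).ncard = (TS k B₀).ncard := by
      rw [hA₀e]; exact slice_ncard_TS k d A 0
    have hT₁ : (TS k A₁).ncard = (TS k B₁).ncard := by
      rw [hA₁e]; exact slice_ncard_TS k d A 1
    have hn₀ : A₀.ncard = B₀.ncard := by rw [hA₀e]; exact slice_ncard d A 0
    have hn₁ : A₁.ncard = B₁.ncard := by rw [hA₁e]; exact slice_ncard d A 1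
    have hBc : ∀ c : ℤ, {y : Fin d → ℤ | Fin.snoc y c ∈ A} ⊆ cube 2 d := by
      intro c y hy i
      have := hA hy (Fin.castSucc i)
      rwa [Fin.snoc_castSucc] at this
    have hIH₀ : ((TS k B₀).ncard : ℝ) ≤ (B₀.ncard : ℝ) ^ p := ih B₀ (hBc 0)
    have hIH₁ : ((TS k B₁).ncard : ℝ) ≤ (B₁.ncard : ℝ) ^ p := ih B₁ (hBc 1)
    -- cardinality split
    have hAsplit : A = A₀ ∪ A₁ := by
      ext x
      constructor
      · intro hx
        rcases h01 x hx with h | h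
        · exact Or.inl ⟨hx, h⟩
        · exact Or.inr ⟨hx, h⟩
      · rintro (⟨hx, _⟩ | ⟨hx, _⟩) <;> exact hx
    have hdisj : Disjoint A₀ A₁ := by
      rw [Set.disjoint_left]
      rintro x ⟨_, h0⟩ ⟨_, h1⟩
      rw [h0] at h1
      exact absurd h1 (by norm_num)
    have hA₀f : A₀.Finite := hAfin.subset fun x hx => hx.1
    have hA₁f : A₁.Finite := hAfin.subset fun x hx => hx.1
    have hcard : (A.ncard : ℝ) = (B₀.ncard : ℝ) + (B₁.ncard : ℝ) := by
      rw [hAsplit, Set.ncard_union_eq hdisj hA₀f hA₁f, hn₀, hn₁]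
      push_cast
      ring
    -- real estimates
    set x : ℝ := (B₀.ncard : ℝ) with hx
    set y : ℝ := (B₁.ncard : ℝ) with hy
    have hx0 : 0 ≤ x := by positivity
    have hy0 : 0 ≤ y := by positivity
    have hsq : Real.sqrt (((TS k A₀).ncard : ℝ) * ((TS k A₁).ncard : ℝ)) ≤ (x*y)^(p/2) := by
      have h1 : ((TS k A₀).ncard : ℝ) * ((TS k A₁).ncard : ℝ) ≤ x^p * y^p := by
        rw [hT₀, hT₁]
        exact mul_le_mul hIH₀ hIH₁ (by positivity) (by positivity)
      have h2 := Real.sqrt_le_sqrt h1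
      refine h2.trans (le_of_eq ?_)
      rw [← Real.mul_rpow hx0 hy0, Real.sqrt_eq_rpow, ← Real.rpow_mul (by positivity)]
      congr 1
      ring
    have hTA₀ : ((TS k A₀).ncard : ℝ) ≤ x^p := by rw [hT₀]; exact hIH₀
    have hTA₁ : ((TS k A₁).ncard : ℝ) ≤ y^p := by rw [hT₁]; exact hIH₁
    have hkey := key_ineq hp2 hpc hx0 hy0
    have h2k : 2 * (k:ℝ) = (2:ℝ)^p - 2 := by rw [h2p]; ring
    calc ((TS k A).ncard : ℝ)
        ≤ ((TS k A₀).ncard : ℝ) + ((TS k A₁).ncard : ℝ)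
          + 2 * k * Real.sqrt (((TS k A₀).ncard : ℝ) * ((TS k A₁).ncard : ℝ)) := hms
      _ ≤ x^p + y^p + 2 * k * ((x*y)^(p/2)) := by
          have hkn : (0:ℝ) ≤ 2 * k := by positivity
          have := mul_le_mul_of_nonneg_left hsq hkn
          linarith
      _ = x^p + y^p + ((2:ℝ)^p - 2) * ((x*y)^(p/2)) := by rw [← h2k]
      _ ≤ (x + y)^p := hkey
      _ = (A.ncard : ℝ) ^ p := by rw [hcard]

end Main

end EnergyAux

theorem energy_bound_binary_cube (d k : ℕ) (hk : 2 ≤ k)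
    (A : Set (Fin d → ℤ)) (hA : A ⊆ cube 2 d) :
    (Pk k A : ℝ) ≤ (A.ncard : ℝ) ^ Real.logb 2 (2 * (k : ℝ) + 2) := by
  rw [EnergyAux.Pk_eq_TS k A]
  exact EnergyAux.main_bound k hk d A hA
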